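/- Let A be a real n×n matrix with nonnegative entries such that Σ_{j=1}^n a_ij ≤ 1 for every row i. Let Γ be a p×p matrix with nonnegative entries and let L be its Laplacian. Let K be an n×n diagonal matrix whose diagonal entries satisfy 0 ≤ k_ii and l_qq·k_ii ≤ a_ii for every i = 1,…,n and every q = 1,…,p (this is condition k_ii ≤ a_ii/l_m of the paper, made precise so that every Gershgorin center a_ii − l_qq·k_ii is nonnegative). Then every (complex) eigenvalue λ of the np×np matrix I_p ⊗ A − L ⊗ K satisfies |λ| ≤ 1, so the stacked synchronization dynamics z(k+1) = (I_p ⊗ A − L ⊗ K)·z(k) is stable and the array of p coupled identical systems z_i(k+1) = A z_i(k) + K Σ_j γ_ij (z_j(k) − z_i(k)) synchronizes. -/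

import Mathlib

open Kronecker Finset

/-- Synchronization theorem: let `A` be entrywise nonnegative with row sums at most 1,
`Γ` a nonnegative weight matrix with Laplacian `L`, and `K` a diagonal matrix with
`0 ≤ k_ii` and `l_qq k_ii ≤ a_ii` for all `i, q`. Then every complex eigenvalue `λ`
of the stacked synchronization matrix `I_p ⊗ A - L ⊗ K` satisfies `|λ| ≤ 1`, so the
stacked dynamics `z(k+1) = (I_p ⊗ A - L ⊗ K) z(k)` is stable and the array of `p`
coupled identical systems synchronizes. -/
theorem stacked_synchronization_spectrum (n p : ℕ)
    (A : Matrix (Fin n) (Fin n) ℝ)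
    (hA : ∀ i j, 0 ≤ A i j)
    (hArow : ∀ i, ∑ j, A i j ≤ 1)
    (Γ L : Matrix (Fin p) (Fin p) ℝ)
    (hΓ : ∀ i j, 0 ≤ Γ i j)
    (hL : ∀ i j, L i j = if i = j then ∑ k, Γ i k else -Γ i j)
    (K : Matrix (Fin n) (Fin n) ℝ)
    (hKdiag : ∀ i j, i ≠ j → K i j = 0)
    (hKnonneg : ∀ i, 0 ≤ K i i)
    (hKbound : ∀ (i : Fin n) (q : Fin p), L q q * K i i ≤ A i i) :
    ∀ μ : ℂ, μ ∈ spectrum ℂ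
        ((((1 : Matrix (Fin p) (Fin p) ℝ) ⊗ₖ A) - (L ⊗ₖ K)).map (algebraMap ℝ ℂ)) →
      ‖μ‖ ≤ 1 := by
  intro μ hμ
  classical
  set M : Matrix (Fin p × Fin n) (Fin p × Fin n) ℂ :=
    (((1 : Matrix (Fin p) (Fin p) ℝ) ⊗ₖ A) - (L ⊗ₖ K)).map (algebraMap ℝ ℂ) with hMdef
  have hent : ∀ x y : Fin p × Fin n,
      M x y = ((((if x.1 = y.1 then (1:ℝ) else 0) * A x.2 y.2 - L x.1 y.1 * K x.2 y.2) : ℝ) : ℂ) := by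
    intro x y
    simp [hMdef, Matrix.map_apply, Matrix.sub_apply, Matrix.kroneckerMap_apply,
      Matrix.one_apply, Complex.ofReal_sub, Complex.ofReal_mul]
  have hev : Module.End.HasEigenvalue (Matrix.toLin' M) μ := by
    rw [Module.End.hasEigenvalue_iff_mem_spectrum]
    have h1 : spectrum ℂ (Matrix.toLinAlgEquiv' M) = spectrum ℂ M :=
      AlgEquiv.spectrum_eq _ M
    have h2 : Matrix.toLinAlgEquiv' M = Matrix.toLin' M := rfl
    rw [← h2, h1]; exact hμ
  obtain ⟨k, hk⟩ := eigenvalue_mem_ball hev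
  obtain ⟨q, i⟩ := k
  rw [Metric.mem_closedBall, dist_eq_norm] at hk
  have hc0 : (0:ℝ) ≤ A i i - L q q * K i i := sub_nonneg.mpr (hKbound i q)
  have hnorm : ∀ x : Fin p × Fin n,
      ‖M (q, i) x‖ = |(if q = x.1 then (1:ℝ) else 0) * A i x.2 - L q x.1 * K i x.2| := by
    intro x; rw [hent]; exact (Complex.norm_real _).trans (Real.norm_eq_abs _)
  have habs : ‖μ‖ ≤ ∑ x : Fin p × Fin n, ‖M (q, i) x‖ := by
    have h2 : ‖μ‖ ≤ ‖μ - M (q, i) (q, i)‖ + ‖M (q, i) (q, i)‖ := by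
      calc ‖μ‖ = ‖μ - M (q, i) (q, i) + M (q, i) (q, i)‖ := by ring_nf
        _ ≤ _ := norm_add_le _ _
    have h3 : ∑ x ∈ univ.erase (q, i), ‖M (q, i) x‖ + ‖M (q, i) (q, i)‖
        = ∑ x : Fin p × Fin n, ‖M (q, i) x‖ := by
      rw [add_comm]
      exact Finset.add_sum_erase univ (fun x => ‖M (q, i) x‖) (mem_univ (q, i))
    calc (‖μ‖ : ℝ) = ‖μ‖ := rfl
      _ ≤ ‖μ - M (q, i) (q, i)‖ + ‖M (q, i) (q, i)‖ := h2
      _ ≤ ∑ x ∈ univ.erase (q, i), ‖M (q, i) x‖ + ‖M (q, i) (q, i)‖ := by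
          exact add_le_add_left hk _
      _ = _ := h3
  -- compute the inner sums
  have hsplit : ∀ q' : Fin p,
      ∑ j, |(if q = q' then (1:ℝ) else 0) * A i j - L q q' * K i j|
        = if q = q' then (A i i - L q q * K i i) + ∑ j ∈ univ.erase i, A i j
          else Γ q q' * K i i := by
    intro q'
    by_cases h : q = q'
    · subst h
      simp only [eq_self_iff_true, if_true, one_mul]
      rw [← Finset.add_sum_erase univ (fun j => |A i j - L q q * K i j|) (mem_univ i)]
      congr 1
      · exact abs_of_nonneg hc0
      · refine Finset.sum_congr rfl fun j hj => ?_
        rw [hKdiag i j (Ne.symm (Finset.ne_of_mem_erase hj)), mul_zero, sub_zero,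
          abs_of_nonneg (hA i j)]
    · simp only [if_neg h, zero_mul, zero_sub, abs_neg]
      rw [Finset.sum_eq_single i
        (fun j _ hj => by rw [hKdiag i j (Ne.symm hj), mul_zero, abs_zero])
        (fun hi => absurd (mem_univ i) hi)]
      rw [hL q q', if_neg h, neg_mul, abs_neg,
        abs_of_nonneg (mul_nonneg (hΓ q q') (hKnonneg i))]
  have hLqq : L q q = ∑ k, Γ q k := by rw [hL q q, if_pos rfl]
  calc ‖μ‖ ≤ ∑ x : Fin p × Fin n, ‖M (q, i) x‖ := habs
    _ = ∑ q' : Fin p, ∑ j : Fin n,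
          |(if q = q' then (1:ℝ) else 0) * A i j - L q q' * K i j| := by
        rw [Fintype.sum_prod_type]
        exact Finset.sum_congr rfl fun q' _ => Finset.sum_congr rfl fun j _ => hnorm (q', j)
    _ = ((A i i - L q q * K i i) + ∑ j ∈ univ.erase i, A i j)
          + ∑ q' ∈ univ.erase q, Γ q q' * K i i := by
        rw [← Finset.add_sum_erase univ _ (mem_univ q), hsplit q, if_pos rfl]
        congr 1
        refine Finset.sum_congr rfl fun q' hq' => ?_
        rw [hsplit q', if_neg (Ne.symm (Finset.ne_of_mem_erase hq'))]
    _ ≤ ((A i i - L q q * K i i) + ∑ j ∈ univ.erase i, A i j) + L q q * K i i := by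
        refine add_le_add_right ?_ _
        rw [← Finset.sum_mul, hLqq]
        refine mul_le_mul_of_nonneg_right ?_ (hKnonneg i)
        exact Finset.sum_le_sum_of_subset_of_nonneg (Finset.subset_univ _)
          (fun j _ _ => hΓ q j)
    _ = ∑ j, A i j := by
        rw [← Finset.add_sum_erase univ _ (mem_univ i)]; ring
    _ ≤ 1 := hArow i
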